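/- Let R be m×n with I - RᵀR positive definite, and S be m×k with I - SᵀS - (RᵀS)ᵀ(I - RᵀR)⁻¹(RᵀS) positive semidefinite. Then for all w⁺ ∈ ℝⁿ, G ∈ ℝᵏ, and diagonal matrices Λ⁺ ⪰ 0 (n×n), Λ⁻ ⪯ 0 (m×m), the strong inhomogeneous boundary condition √|Λ⁻| w⁻ = R √Λ⁺ w⁺ + S G implies the bound (w⁺)ᵀ Λ⁺ w⁺ + (w⁻)ᵀ Λ⁻ w⁻ ≥ -GᵀG. -/

import Mathlib

open Matrix

/-- Strong inhomogeneous boundary conditions: if `I - RᵀR ≻ 0` and the `S`-condition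
holds, then the boundary term is bounded below by `-GᵀG`. -/
theorem stmt4 (n m k : ℕ) (lp : Fin n → ℝ) (lm : Fin m → ℝ)
    (hlp : ∀ i, 0 ≤ lp i) (hlm : ∀ i, lm i ≤ 0)
    (R : Matrix (Fin m) (Fin n) ℝ) (S : Matrix (Fin m) (Fin k) ℝ)
    (hR : ((1 : Matrix (Fin n) (Fin n) ℝ) - Rᵀ * R).PosDef)
    (hS : ((1 : Matrix (Fin k) (Fin k) ℝ) - Sᵀ * S
        - (Rᵀ * S)ᵀ * (1 - Rᵀ * R)⁻¹ * (Rᵀ * S)).PosSemidef)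
    (wp : Fin n → ℝ) (wm : Fin m → ℝ) (G : Fin k → ℝ)
    (hbc : (fun i => Real.sqrt (-(lm i)) * wm i)
        = R.mulVec (fun i => Real.sqrt (lp i) * wp i) + S.mulVec G) :
    -(G ⬝ᵥ G) ≤ ∑ i, lp i * (wp i) ^ 2 + ∑ i, lm i * (wm i) ^ 2 := by
  set x : Fin n → ℝ := fun i => Real.sqrt (lp i) * wp i with hxdef
  set y : Fin m → ℝ := fun i => Real.sqrt (-(lm i)) * wm i with hydef
  set A : Matrix (Fin n) (Fin n) ℝ := 1 - Rᵀ * R with hAdef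
  set B : Matrix (Fin n) (Fin k) ℝ := Rᵀ * S with hBdef
  clear_value x y A B
  -- sums as dot products
  have hsum1 : ∑ i, lp i * (wp i) ^ 2 = x ⬝ᵥ x := by
    unfold dotProduct
    refine Finset.sum_congr rfl fun i _ => ?_
    have h := Real.mul_self_sqrt (hlp i)
    simp only [hxdef]
    ring_nf
    nlinarith [h]
  have hsum2 : ∑ i, lm i * (wm i) ^ 2 = -(y ⬝ᵥ y) := by
    unfold dotProduct
    rw [← Finset.sum_neg_distrib]
    refine Finset.sum_congr rfl fun i _ => ?_
    have h := Real.mul_self_sqrt (neg_nonneg.mpr (hlm i))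
    simp only [hydef]
    ring_nf
    nlinarith [h]
  rw [hsum1, hsum2]
  -- matrix facts
  have hAT : Aᵀ = A := by
    simp [hAdef, Matrix.transpose_sub, Matrix.transpose_mul]
  have hdet : IsUnit A.det := isUnit_iff_ne_zero.mpr (ne_of_gt hR.det_pos)
  have hAinv : A * A⁻¹ = 1 := Matrix.mul_nonsing_inv A hdet
  have hAIT : (A⁻¹)ᵀ = A⁻¹ := by
    rw [Matrix.transpose_nonsing_inv, hAT]
  have hsymmA : ∀ v w : Fin n → ℝ, v ⬝ᵥ A.mulVec w = w ⬝ᵥ A.mulVec v := by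
    intro v w
    rw [Matrix.dotProduct_mulVec, ← Matrix.mulVec_transpose, hAT, dotProduct_comm]
  -- completed square vector
  set u : Fin n → ℝ := (A⁻¹ * B).mulVec G with hudef
  set z : Fin n → ℝ := x - u with hzdef
  clear_value u z
  have hAu : A.mulVec u = B.mulVec G := by
    rw [hudef, Matrix.mulVec_mulVec, ← Matrix.mul_assoc, hAinv, Matrix.one_mul]
  have huBG : u ⬝ᵥ B.mulVec G = G ⬝ᵥ ((Bᵀ * A⁻¹ * B).mulVec G) := by
    rw [hudef, dotProduct_comm, Matrix.dotProduct_mulVec, dotProduct_comm,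
      show Bᵀ * A⁻¹ * B = (A⁻¹ * B)ᵀ * B from by rw [Matrix.transpose_mul, hAIT],
      ← Matrix.mulVec_mulVec, Matrix.mulVec_transpose]
  -- expansion of z ⬝ᵥ A z
  have hzz : z ⬝ᵥ A.mulVec z
      = x ⬝ᵥ A.mulVec x - 2 * (x ⬝ᵥ B.mulVec G) + G ⬝ᵥ ((Bᵀ * A⁻¹ * B).mulVec G) := by
    rw [hzdef, Matrix.mulVec_sub, sub_dotProduct, dotProduct_sub,
      dotProduct_sub, hAu]
    rw [hsymmA u x, hAu, huBG]
    ring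
  -- expansion of y ⬝ᵥ y using boundary condition
  have hy : y = R.mulVec x + S.mulVec G := hbc
  have hRxSG : (R.mulVec x) ⬝ᵥ (S.mulVec G) = x ⬝ᵥ B.mulVec G := by
    rw [hBdef, ← Matrix.mulVec_mulVec, Matrix.dotProduct_mulVec x, Matrix.vecMul_transpose]
  have hyy : y ⬝ᵥ y = (R.mulVec x) ⬝ᵥ (R.mulVec x) + 2 * (x ⬝ᵥ B.mulVec G)
      + (S.mulVec G) ⬝ᵥ (S.mulVec G) := by
    rw [hy, add_dotProduct, dotProduct_add, dotProduct_add,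
      hRxSG, dotProduct_comm (S.mulVec G) (R.mulVec x), hRxSG]
    ring
  have hxAx : x ⬝ᵥ A.mulVec x = x ⬝ᵥ x - (R.mulVec x) ⬝ᵥ (R.mulVec x) := by
    rw [hAdef, Matrix.sub_mulVec, dotProduct_sub, Matrix.one_mulVec]
    congr 1
    rw [← Matrix.mulVec_mulVec, Matrix.dotProduct_mulVec x, Matrix.vecMul_transpose]
  have hGSS : G ⬝ᵥ ((Sᵀ * S).mulVec G) = (S.mulVec G) ⬝ᵥ (S.mulVec G) := by
    rw [← Matrix.mulVec_mulVec, Matrix.dotProduct_mulVec G, Matrix.vecMul_transpose]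
  -- positivity
  have hz0 : 0 ≤ z ⬝ᵥ A.mulVec z := by
    simpa using hR.posSemidef.dotProduct_mulVec_nonneg z
  have hG0 : 0 ≤ G ⬝ᵥ ((1 - Sᵀ * S - Bᵀ * A⁻¹ * B).mulVec G) := by
    simpa [hAdef, hBdef] using hS.dotProduct_mulVec_nonneg G
  have hGexp : G ⬝ᵥ ((1 - Sᵀ * S - Bᵀ * A⁻¹ * B).mulVec G)
      = G ⬝ᵥ G - (S.mulVec G) ⬝ᵥ (S.mulVec G) - G ⬝ᵥ ((Bᵀ * A⁻¹ * B).mulVec G) := by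
    rw [Matrix.sub_mulVec, Matrix.sub_mulVec, dotProduct_sub,
      dotProduct_sub, Matrix.one_mulVec, hGSS]
  linarith [hz0, hG0, hzz, hyy, hxAx, hGexp]
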